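/- Let {p_k} and {a_k} be sequences of nonnegative reals with ∑_k 1/p_k = ∞ and a_k → ∞, and let h : [0,1] → (0,∞) satisfy h(t) ≥ min(h(c), h(1−c)) > 0 for every 0 ≤ c < 1/2 and every t ∈ [c, 1−c]. Then the set S = {t ∈ ℝ : ∑_k h({t·a_k})/p_k < ∞} has Lebesgue measure zero, where {x} denotes the fractional part of x. -/

import Mathlib

open Real Filter MeasureTheory
open scoped ENNReal

lemma stmt8_bad (c M A : ℝ) (hc : 0 < c) (hM : 0 ≤ M) (hA : 1 ≤ A) :
    volume {t : ℝ | t ∈ Set.Icc (-M) M ∧ Int.fract (t * A) ∉ Set.Icc c (1 - c)}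
      ≤ ENNReal.ofReal ((4 * M + 14) * c) := by
  have hA0 : 0 < A := lt_of_lt_of_le one_pos hA
  set N : ℕ := ⌈M * A⌉₊ + 2 with hN
  have hNb : (N : ℝ) ≤ M * A + 3 := by
    have := Nat.ceil_lt_add_one (by positivity : (0:ℝ) ≤ M * A)
    push_cast [hN]
    linarith
  have hN2 : M * A + 2 ≤ (N : ℝ) := by
    have := Nat.le_ceil (M * A)
    push_cast [hN]
    linarith
  have hNc : ((⌈M * A⌉₊ : ℕ) : ℝ) = (N : ℝ) - 2 := by push_cast [hN]; ring
  have hsub : {t : ℝ | t ∈ Set.Icc (-M) M ∧ Int.fract (t * A) ∉ Set.Icc c (1 - c)} ⊆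
      ⋃ j ∈ Finset.Icc (-(N:ℤ)) (N:ℤ), Set.Icc (((j:ℝ) - c)/A) (((j:ℝ) + c)/A) := by
    rintro t ⟨⟨ht1, ht2⟩, hbad⟩
    have hMA : |t * A| ≤ M * A := by
      rw [abs_mul, abs_of_pos hA0]
      exact mul_le_mul_of_nonneg_right (abs_le.2 ⟨ht1, ht2⟩) hA0.le
    have habs := abs_le.1 hMA
    have hfr0 : 0 ≤ Int.fract (t * A) := Int.fract_nonneg _
    have hfr1 : Int.fract (t * A) < 1 := Int.fract_lt_one _
    have hcase : Int.fract (t * A) < c ∨ 1 - c < Int.fract (t * A) := by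
      by_contra hcon
      push_neg at hcon
      exact hbad ⟨hcon.1, hcon.2⟩
    have hfl : (⌊t * A⌋ : ℝ) = t * A - Int.fract (t * A) := by
      rw [Int.self_sub_fract]
    rcases hcase with hlt | hgt
    · refine Set.mem_iUnion₂.2 ⟨⌊t * A⌋, ?_, ?_⟩
      · simp only [Finset.mem_Icc]
        constructor
        · have : -(M * A) - 1 ≤ (⌊t * A⌋ : ℝ) := by
            have := Int.sub_one_lt_floor (t * A)
            linarith
          have hNr : -(N:ℝ) ≤ (⌊t * A⌋ : ℝ) := by linarith
          exact_mod_cast hNr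
        · have : (⌊t * A⌋ : ℝ) ≤ M * A := le_trans (Int.floor_le _) habs.2
          have hNr : (⌊t * A⌋ : ℝ) ≤ (N:ℝ) := by linarith
          exact_mod_cast hNr
      · constructor
        · rw [div_le_iff₀ hA0]; nlinarith [Int.fract_nonneg (t * A)]
        · rw [le_div_iff₀ hA0]; nlinarith
    · refine Set.mem_iUnion₂.2 ⟨⌊t * A⌋ + 1, ?_, ?_⟩
      · simp only [Finset.mem_Icc]
        constructor
        · have : -(M * A) - 1 ≤ (⌊t * A⌋ : ℝ) := by
            have := Int.sub_one_lt_floor (t * A)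
            linarith
          have hNr : -(N:ℝ) ≤ ((⌊t * A⌋ + 1 : ℤ) : ℝ) := by push_cast; linarith
          exact_mod_cast hNr
        · have : (⌊t * A⌋ : ℝ) ≤ M * A := le_trans (Int.floor_le _) habs.2
          have hNr : ((⌊t * A⌋ + 1 : ℤ) : ℝ) ≤ (N:ℝ) := by push_cast; linarith
          exact_mod_cast hNr
      · constructor
        · rw [div_le_iff₀ hA0]; push_cast; nlinarith
        · rw [le_div_iff₀ hA0]; push_cast; nlinarith
  calc volume _ ≤ ∑ j ∈ Finset.Icc (-(N:ℤ)) (N:ℤ), volume (Set.Icc (((j:ℝ) - c)/A) (((j:ℝ) + c)/A)) :=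
        le_trans (measure_mono hsub) (measure_biUnion_finset_le _ _)
    _ = ∑ j ∈ Finset.Icc (-(N:ℤ)) (N:ℤ), ENNReal.ofReal (2 * c / A) := by
        refine Finset.sum_congr rfl fun j _ => ?_
        rw [Real.volume_Icc]
        congr 1
        field_simp
        ring
    _ ≤ ENNReal.ofReal ((4 * M + 14) * c) := by
        rw [Finset.sum_const]
        have hcard : (Finset.Icc (-(N:ℤ)) (N:ℤ)).card = 2 * N + 1 := by
          rw [Int.card_Icc]
          omega
        rw [hcard, nsmul_eq_mul]
        have hNb' : (N : ℝ) ≤ M * A + 3 := hNb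
        calc ((2 * N + 1 : ℕ) : ℝ≥0∞) * ENNReal.ofReal (2 * c / A)
            = ENNReal.ofReal ((2 * N + 1 : ℕ)) * ENNReal.ofReal (2 * c / A) := by
              rw [ENNReal.ofReal_natCast]
          _ = ENNReal.ofReal (((2 * N + 1 : ℕ) : ℝ) * (2 * c / A)) := by
              rw [← ENNReal.ofReal_mul (by positivity)]
          _ ≤ ENNReal.ofReal ((4 * M + 14) * c) := by
              apply ENNReal.ofReal_le_ofReal
              have heq : ((2 * N + 1 : ℕ) : ℝ) * (2 * c / A)
                  = (((2 * N + 1 : ℕ) : ℝ) * (2 * c)) / A := by ring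
              rw [heq, div_le_iff₀ hA0]
              push_cast
              nlinarith [mul_le_mul_of_nonneg_right hNb' (le_of_lt hc),
                mul_nonneg (mul_nonneg hM hc.le) (by linarith : (0:ℝ) ≤ A - 1),
                mul_nonneg hc.le (by linarith : (0:ℝ) ≤ A - 1)]

lemma stmt8_core (p a : ℕ → ℝ) (hp : ∀ k, 0 ≤ p k)
    (hdiv : ¬ Summable (fun k => 1 / p k))
    (hainf : Tendsto a atTop atTop)
    (c M m : ℝ) (hc : 0 < c) (hM : 0 ≤ M) (hm : 0 < m) (n : ℕ)
    (U : Set ℝ) (hUmeas : MeasurableSet U) (hUsub : U ⊆ Set.Icc (-M) M)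
    (hUb : ∀ t ∈ U, (∑' k, Set.indicator {s : ℝ | Int.fract (s * a k) ∈ Set.Icc c (1 - c)}
        (fun _ => ENNReal.ofReal (m / p k)) t) ≤ n) :
    volume U ≤ ENNReal.ofReal ((4 * M + 14) * c) := by
  by_contra hlt
  push_neg at hlt
  have hUfin : volume U ≠ ⊤ := by
    refine ne_top_of_le_ne_top ?_ (measure_mono hUsub)
    simp [Real.volume_Icc]
  obtain ⟨K, hK⟩ := eventually_atTop.mp (hainf.eventually_ge_atTop 1)
  set good : ℕ → Set ℝ := fun k => {s : ℝ | Int.fract (s * a k) ∈ Set.Icc c (1 - c)} with hgood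
  have hgoodmeas : ∀ k, MeasurableSet (good k) := by
    intro k
    have : Measurable fun s : ℝ => Int.fract (s * a k) :=
      measurable_fract.comp (measurable_id.mul_const (a k))
    exact this measurableSet_Icc
  set ε : ℝ≥0∞ := volume U - ENNReal.ofReal ((4 * M + 14) * c) with hε
  have hεpos : 0 < ε := tsub_pos_of_lt hlt
  have hcap : ∀ k, K ≤ k → ε ≤ volume (good k ∩ U) := by
    intro k hk
    have hsplit : volume U ≤ volume (U ∩ good k) + volume (U \ good k) :=
      measure_le_inter_add_diff volume U (good k)
    have hbadsub : U \ good k ⊆ {t : ℝ | t ∈ Set.Icc (-M) M ∧ Int.fract (t * a k) ∉ Set.Icc c (1 - c)} := by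
      rintro t ⟨htU, htg⟩
      exact ⟨hUsub htU, htg⟩
    have hbad : volume (U \ good k) ≤ ENNReal.ofReal ((4 * M + 14) * c) :=
      le_trans (measure_mono hbadsub) (stmt8_bad c M (a k) hc hM (hK k hk))
    rw [Set.inter_comm]
    exact tsub_le_iff_right.mpr (le_trans hsplit (add_le_add le_rfl hbad))
  -- the integral bound
  have hle1 : ∫⁻ t in U, (∑' k, Set.indicator (good k) (fun _ => ENNReal.ofReal (m / p k)) t)
      ≤ (n : ℝ≥0∞) * volume U := by
    calc ∫⁻ t in U, (∑' k, Set.indicator (good k) (fun _ => ENNReal.ofReal (m / p k)) t)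
        ≤ ∫⁻ _ in U, (n : ℝ≥0∞) := setLIntegral_mono' hUmeas (fun t ht => hUb t ht)
      _ = (n : ℝ≥0∞) * volume U := by
          rw [setLIntegral_const]
  have htsum : ∫⁻ t in U, (∑' k, Set.indicator (good k) (fun _ => ENNReal.ofReal (m / p k)) t)
      = ∑' k, ∫⁻ t in U, Set.indicator (good k) (fun _ => ENNReal.ofReal (m / p k)) t :=
    lintegral_tsum (fun k => ((measurable_const.indicator (hgoodmeas k))).aemeasurable)
  have hI : ∀ k, K ≤ k →
      ENNReal.ofReal (1 / p k) * (ENNReal.ofReal m * ε)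
        ≤ ∫⁻ t in U, Set.indicator (good k) (fun _ => ENNReal.ofReal (m / p k)) t := by
    intro k hk
    rw [lintegral_indicator (hgoodmeas k), setLIntegral_const,
      Measure.restrict_apply (hgoodmeas k)]
    have hCeq : ENNReal.ofReal (m / p k) = ENNReal.ofReal m * ENNReal.ofReal (1 / p k) := by
      rw [← ENNReal.ofReal_mul hm.le, mul_one_div]
    rw [hCeq]
    calc ENNReal.ofReal (1 / p k) * (ENNReal.ofReal m * ε)
        = ENNReal.ofReal m * ENNReal.ofReal (1 / p k) * ε := by ring
      _ ≤ ENNReal.ofReal m * ENNReal.ofReal (1 / p k) * volume (good k ∩ U) :=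
          mul_le_mul' le_rfl (hcap k hk)
  have h3 : ∑' k : ℕ, ENNReal.ofReal (1 / p (k + K)) = ⊤ := by
    by_contra hne
    have hsum : Summable fun k : ℕ => (ENNReal.ofReal (1 / p (k + K))).toReal :=
      ENNReal.summable_toReal hne
    have hsum' : Summable fun k : ℕ => 1 / p (k + K) := by
      refine hsum.congr fun k => ?_
      exact ENNReal.toReal_ofReal (one_div_nonneg.mpr (hp _))
    exact hdiv ((summable_nat_add_iff K).mp hsum')
  have htop : (⊤ : ℝ≥0∞) ≤ (n : ℝ≥0∞) * volume U := by
    calc (⊤ : ℝ≥0∞) = (∑' k : ℕ, ENNReal.ofReal (1 / p (k + K))) * (ENNReal.ofReal m * ε) := by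
          rw [h3]
          rw [ENNReal.top_mul]
          exact (ENNReal.mul_pos (by simpa using hm) hεpos.ne').ne'
      _ = ∑' k : ℕ, ENNReal.ofReal (1 / p (k + K)) * (ENNReal.ofReal m * ε) := by
          rw [ENNReal.tsum_mul_right]
      _ ≤ ∑' k : ℕ, ∫⁻ t in U, Set.indicator (good (k + K)) (fun _ => ENNReal.ofReal (m / p (k + K))) t :=
          ENNReal.tsum_le_tsum (fun k => hI (k + K) (Nat.le_add_left K k))
      _ ≤ ∑' k : ℕ, ∫⁻ t in U, Set.indicator (good k) (fun _ => ENNReal.ofReal (m / p k)) t :=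
          ENNReal.tsum_comp_le_tsum_of_injective (add_left_injective K) _
      _ ≤ (n : ℝ≥0∞) * volume U := by rw [← htsum]; exact hle1
  exact (ENNReal.mul_ne_top (ENNReal.natCast_ne_top n) hUfin) (top_le_iff.mp htop)

theorem stmt8
    (p a : ℕ → ℝ) (hp : ∀ k, 0 ≤ p k) (ha : ∀ k, 0 ≤ a k)
    (hdiv : ¬ Summable (fun k => 1 / p k))
    (hainf : Tendsto a atTop atTop)
    (h : ℝ → ℝ) (hpos : ∀ t ∈ Set.Icc (0:ℝ) 1, 0 < h t)
    (hmin : ∀ c : ℝ, 0 ≤ c → c < 1/2 →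
      (0 < min (h c) (h (1 - c))) ∧
      ∀ t ∈ Set.Icc c (1 - c), min (h c) (h (1 - c)) ≤ h t) :
    volume {t : ℝ | Summable (fun k => h (Int.fract (t * a k)) / p k)} = 0 := by
  set S := {t : ℝ | Summable fun k => h (Int.fract (t * a k)) / p k} with hS
  have key : ∀ M : ℕ, volume (S ∩ Set.Icc (-(M:ℝ)) (M:ℝ)) = 0 := by
    intro M
    have hbound : ∀ c : ℝ, 0 < c → c < 1/2 →
        volume (S ∩ Set.Icc (-(M:ℝ)) (M:ℝ)) ≤ ENNReal.ofReal ((4 * (M:ℝ) + 14) * c) := by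
      intro c hc hc2
      obtain ⟨hm, hmle⟩ := hmin c hc.le hc2
      set m := min (h c) (h (1 - c)) with hmdef
      set F : ℝ → ℕ → ℝ≥0∞ := fun t k =>
        Set.indicator {s : ℝ | Int.fract (s * a k) ∈ Set.Icc c (1 - c)}
          (fun _ => ENNReal.ofReal (m / p k)) t with hF
      set U : ℕ → Set ℝ := fun n => Set.Icc (-(M:ℝ)) (M:ℝ) ∩ {t | (∑' k, F t k) ≤ n} with hU
      have hgoodmeas : ∀ k, MeasurableSet {s : ℝ | Int.fract (s * a k) ∈ Set.Icc c (1 - c)} := by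
        intro k
        have : Measurable fun s : ℝ => Int.fract (s * a k) :=
          measurable_fract.comp (measurable_id.mul_const (a k))
        exact this measurableSet_Icc
      have hFmeas : ∀ k, Measurable fun t => F t k := fun k =>
        measurable_const.indicator (hgoodmeas k)
      have hsummeas : Measurable fun t => ∑' k, F t k := Measurable.ennreal_tsum hFmeas
      have hUmeas : ∀ n, MeasurableSet (U n) := fun n =>
        measurableSet_Icc.inter (hsummeas measurableSet_Iic)
      have hsub : S ∩ Set.Icc (-(M:ℝ)) (M:ℝ) ⊆ ⋃ n : ℕ, U n := by
        rintro t ⟨htS, htI⟩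
        have hsumm : Summable fun k => h (Int.fract (t * a k)) / p k := htS
        have hnonneg : ∀ k, 0 ≤ h (Int.fract (t * a k)) / p k := fun k =>
          div_nonneg (hpos _ ⟨Int.fract_nonneg _, (Int.fract_lt_one _).le⟩).le (hp k)
        have hFle : ∀ k, F t k ≤ ENNReal.ofReal (h (Int.fract (t * a k)) / p k) := by
          intro k
          by_cases hmem : t ∈ {s : ℝ | Int.fract (s * a k) ∈ Set.Icc c (1 - c)}
          · rw [hF]
            simp only [Set.indicator_of_mem hmem]
            apply ENNReal.ofReal_le_ofReal
            rw [div_eq_mul_inv, div_eq_mul_inv]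
            exact mul_le_mul_of_nonneg_right (hmle _ hmem) (inv_nonneg.mpr (hp k))
          · rw [hF]
            simp only [Set.indicator_of_notMem hmem]
            exact zero_le
        have htle : (∑' k, F t k) ≤ ENNReal.ofReal (∑' k, h (Int.fract (t * a k)) / p k) := by
          rw [ENNReal.ofReal_tsum_of_nonneg hnonneg hsumm]
          exact ENNReal.tsum_le_tsum hFle
        refine Set.mem_iUnion.2 ⟨⌈∑' k, h (Int.fract (t * a k)) / p k⌉₊, htI, ?_⟩
        refine le_trans htle ?_
        rw [← ENNReal.ofReal_natCast]
        exact ENNReal.ofReal_le_ofReal (Nat.le_ceil _)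
      have hmono : Monotone U := by
        intro i j hij
        refine Set.inter_subset_inter_right _ (fun t ht => ?_)
        have hcast : (i : ℝ≥0∞) ≤ (j : ℝ≥0∞) := Nat.cast_le.mpr hij
        exact le_trans ht hcast
      calc volume (S ∩ Set.Icc (-(M:ℝ)) (M:ℝ)) ≤ volume (⋃ n, U n) := measure_mono hsub
        _ = ⨆ n, volume (U n) := hmono.measure_iUnion
        _ ≤ ENNReal.ofReal ((4 * (M:ℝ) + 14) * c) := by
            refine iSup_le fun n => ?_
            exact stmt8_core p a hp hdiv hainf c (M:ℝ) m hc (Nat.cast_nonneg M) hm n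
              (U n) (hUmeas n) Set.inter_subset_left (fun t ht => ht.2)
    by_contra hne
    have hfin : volume (S ∩ Set.Icc (-(M:ℝ)) (M:ℝ)) ≠ ⊤ := by
      refine ne_top_of_le_ne_top ?_ (measure_mono Set.inter_subset_right)
      simp [Real.volume_Icc]
    set v := (volume (S ∩ Set.Icc (-(M:ℝ)) (M:ℝ))).toReal with hv
    have hvpos : 0 < v := ENNReal.toReal_pos hne hfin
    have hvol : volume (S ∩ Set.Icc (-(M:ℝ)) (M:ℝ)) = ENNReal.ofReal v :=
      (ENNReal.ofReal_toReal hfin).symm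
    set c := min (v / (2 * (4 * (M:ℝ) + 14))) (1/4) with hcdef
    have hden : (0:ℝ) < 4 * (M:ℝ) + 14 := by positivity
    have hc : 0 < c := lt_min (by positivity) (by norm_num)
    have hc2 : c < 1/2 := lt_of_le_of_lt (min_le_right _ _) (by norm_num)
    have hb := hbound c hc hc2
    have h1 : (4 * (M:ℝ) + 14) * c ≤ v / 2 := by
      have : c ≤ v / (2 * (4 * (M:ℝ) + 14)) := min_le_left _ _
      rw [le_div_iff₀ (by positivity)] at this
      linarith
    have : volume (S ∩ Set.Icc (-(M:ℝ)) (M:ℝ)) < volume (S ∩ Set.Icc (-(M:ℝ)) (M:ℝ)) := by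
      calc volume (S ∩ Set.Icc (-(M:ℝ)) (M:ℝ)) ≤ ENNReal.ofReal ((4 * (M:ℝ) + 14) * c) := hb
        _ ≤ ENNReal.ofReal (v / 2) := ENNReal.ofReal_le_ofReal h1
        _ < ENNReal.ofReal v := by
            rw [ENNReal.ofReal_lt_ofReal_iff hvpos]
            linarith
        _ = volume (S ∩ Set.Icc (-(M:ℝ)) (M:ℝ)) := hvol.symm
    exact absurd this (lt_irrefl _)
  have hcover : S ⊆ ⋃ M : ℕ, S ∩ Set.Icc (-(M:ℝ)) (M:ℝ) := by
    intro t ht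
    obtain ⟨M, hM⟩ := exists_nat_ge |t|
    have := abs_le.mp hM
    exact Set.mem_iUnion.2 ⟨M, ht, this.1, this.2⟩
  exact measure_mono_null hcover (measure_iUnion_null fun M => key M)
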